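/- For every positive integer d, the generating function for the number of Schmidt type d-fold partition diamonds satisfies ∑_{n≥0} s_d(n) q^n = ∏_{n≥1} ( ∑_{j≥0} (j+1)^d q^{jn} ), as an identity of formal power series in q over ℤ. -/

import Mathlib

open Finset PowerSeries

/-- A `d`-fold partition diamond: nonnegative integers `a 0, a 1, …` together with
`b k j` (representing `b_{k+1, j+1}`) satisfying `a k ≥ b k j ≥ a (k+1)`,
with all but finitely many entries equal to zero. -/
structure DFold (d : ℕ) where
  a : ℕ → ℕ
  b : ℕ → Fin d → ℕ
  upper : ∀ k j, b k j ≤ a k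
  lower : ∀ k j, a (k + 1) ≤ b k j
  fin : ∃ N, ∀ k, N ≤ k → a k = 0

/-- `sFold d n`: the number of Schmidt type `d`-fold partition diamonds of `n`
(only the links `a k` are summed). -/
noncomputable def sFold (d n : ℕ) : ℕ :=
  Set.ncard {D : DFold d | (∑ᶠ k, D.a k) = n}

namespace SchmidtAux

/-- telescoping sum for an antitone sequence -/
lemma tele (a : ℕ → ℕ) (ha : ∀ i, a (i + 1) ≤ a i) :
    ∀ N k, k ≤ N → ∑ m ∈ Finset.Icc (k + 1) N, (a (m - 1) - a m) = a k - a N := by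
  intro N
  induction N with
  | zero => intro k hk; interval_cases k; simp
  | succ N ih =>
    intro k hk
    rcases Nat.lt_or_ge k (N + 1) with h | h
    · have hk' : k ≤ N := by omega
      rw [Finset.sum_Icc_succ_top (by omega), ih k hk']
      have h1 : a (N + 1) ≤ a N := ha N
      have h2 : a N ≤ a k := antitone_nat_of_succ_le ha hk'
      simp only [Nat.add_sub_cancel]
      omega
    · have : k = N + 1 := by omega
      subst this; simp

/-- Abel summation for an antitone sequence -/
lemma abel (a : ℕ → ℕ) (ha : ∀ i, a (i + 1) ≤ a i) :
    ∀ N, ∑ m ∈ Finset.Icc 1 N, m * (a (m - 1) - a m) + N * a N = ∑ k ∈ Finset.range N, a k := by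
  intro N
  induction N with
  | zero => simp
  | succ N ih =>
    rw [Finset.sum_Icc_succ_top (by omega), Finset.sum_range_succ, ← ih]
    have h1 : a (N + 1) ≤ a N := ha N
    simp only [Nat.add_sub_cancel]
    have : (N + 1) * (a N - a (N + 1)) + (N + 1) * a (N + 1) = (N + 1) * a N := by
      rw [← Nat.mul_add, Nat.sub_add_cancel h1]
    -- goal: ∑ + (N+1)*(aN - a(N+1)) + (N+1)*a(N+1) = ∑ + N*aN + aN
    have h2 : (N + 1) * a N = N * a N + a N := by ring
    omega

def Aseq (N : ℕ) (l : ℕ →₀ ℕ) (k : ℕ) : ℕ := ∑ m ∈ Finset.Icc (k + 1) N, l m / m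

lemma Aseq_zero {N : ℕ} (l : ℕ →₀ ℕ) {k : ℕ} (h : N ≤ k) : Aseq N l k = 0 := by
  unfold Aseq
  rw [Finset.Icc_eq_empty (by omega)]
  simp

lemma Aseq_step {N : ℕ} (l : ℕ →₀ ℕ) {m : ℕ} (h1 : 1 ≤ m) (h2 : m ≤ N) :
    Aseq N l (m - 1) = l m / m + Aseq N l m := by
  unfold Aseq
  have hm : m - 1 + 1 = m := by omega
  rw [hm, ← Finset.Ico_add_one_right_eq_Icc, ← Finset.Ico_add_one_right_eq_Icc,
    Finset.sum_eq_sum_Ico_succ_bot (by omega)]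

lemma Aseq_anti {N : ℕ} (l : ℕ →₀ ℕ) (k : ℕ) : Aseq N l (k + 1) ≤ Aseq N l k := by
  apply Finset.sum_le_sum_of_subset
  apply Finset.Icc_subset_Icc_left; omega

end SchmidtAux

namespace SchmidtAux

def Tset (n N : ℕ) : Finset (ℕ →₀ ℕ) :=
  (Finset.finsuppAntidiag (Finset.Icc 1 N) n).filter fun l => ∀ m ∈ Finset.Icc 1 N, m ∣ l m

lemma mem_Tset {n N : ℕ} {l : ℕ →₀ ℕ} :
    l ∈ Tset n N ↔ (∑ m ∈ Finset.Icc 1 N, l m = n) ∧ l.support ⊆ Finset.Icc 1 N ∧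
      ∀ m ∈ Finset.Icc 1 N, m ∣ l m := by
  unfold Tset
  rw [Finset.mem_filter, Finset.mem_finsuppAntidiag]
  · constructor
    · rintro ⟨⟨h1, h2⟩, h3⟩; exact ⟨h1, h2, h3⟩
    · rintro ⟨h1, h2, h3⟩; exact ⟨⟨h1, h2⟩, h3⟩

/-- construct a diamond from a finsupp `l` and choices `f` -/
def toD (d N : ℕ) (l : ℕ →₀ ℕ) (f : Fin N → Fin d → ℕ) : DFold d where
  a := Aseq N l
  b k j := if h : k < N then min (Aseq N l (k + 1) + f ⟨k, h⟩ j) (Aseq N l k) else 0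
  upper k j := by
    split
    · exact min_le_right _ _
    · exact Nat.zero_le _
  lower k j := by
    split
    · exact le_min (Nat.le_add_right _ _) (Aseq_anti l k)
    · next h => rw [Aseq_zero l (by omega)]
  fin := ⟨N, fun k hk => Aseq_zero l hk⟩

lemma weight_toD {d n N : ℕ} {l : ℕ →₀ ℕ} (hl : l ∈ Tset n N) (f : Fin N → Fin d → ℕ) :
    (∑ᶠ k, (toD d N l f).a k) = n := by
  obtain ⟨h1, h2, h3⟩ := mem_Tset.mp hl
  have hfin : (∑ᶠ k, (toD d N l f).a k) = ∑ k ∈ Finset.range N, Aseq N l k := by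
    apply finsum_eq_sum_of_support_subset
    intro x hx
    simp only [Function.mem_support] at hx
    simp only [Finset.coe_range, Set.mem_Iio]
    by_contra hc
    exact hx (Aseq_zero l (by omega))
  rw [hfin, ← abel (Aseq N l) (Aseq_anti l) N, Aseq_zero l le_rfl, Nat.mul_zero, Nat.add_zero,
    ← h1]
  apply Finset.sum_congr rfl
  intro m hm
  have hm1 : 1 ≤ m := (Finset.mem_Icc.mp hm).1
  have hm2 : m ≤ N := (Finset.mem_Icc.mp hm).2
  rw [Aseq_step l hm1 hm2, Nat.add_sub_cancel]
  exact Nat.mul_div_cancel' (h3 m hm)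

end SchmidtAux

namespace SchmidtAux

lemma dfold_anti {d : ℕ} (hd : 1 ≤ d) (D : DFold d) : ∀ k, D.a (k + 1) ≤ D.a k :=
  fun k => le_trans (D.lower k ⟨0, hd⟩) (D.upper k ⟨0, hd⟩)

lemma a_vanish {d n : ℕ} (hd : 1 ≤ d) {D : DFold d} (hw : (∑ᶠ k, D.a k) = n) :
    ∀ k, n ≤ k → D.a k = 0 := by
  have hanti : Antitone D.a := antitone_nat_of_succ_le (dfold_anti hd D)
  obtain ⟨M, hM⟩ := D.fin
  have hfin : (∑ᶠ k, D.a k) = ∑ k ∈ Finset.range (max (n + 1) M), D.a k := by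
    apply finsum_eq_sum_of_support_subset
    intro x hx
    simp only [Function.mem_support] at hx
    simp only [Finset.coe_range, Set.mem_Iio]
    by_contra hc
    exact hx (hM x (by omega))
  have han : D.a n = 0 := by
    by_contra hc
    have h1 : ∀ k ∈ Finset.range (n + 1), 1 ≤ D.a k := by
      intro k hk
      have := hanti (show k ≤ n by simpa [Nat.lt_succ_iff] using hk)
      omega
    have h2 : (n + 1 : ℕ) ≤ ∑ k ∈ Finset.range (n + 1), D.a k := by
      calc (n + 1 : ℕ) = ∑ _k ∈ Finset.range (n + 1), 1 := by simp
      _ ≤ _ := Finset.sum_le_sum h1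
    have h3 : ∑ k ∈ Finset.range (n + 1), D.a k ≤ ∑ k ∈ Finset.range (max (n + 1) M), D.a k :=
      Finset.sum_le_sum_of_subset (Finset.range_subset_range.mpr (le_max_left _ _))
    omega
  intro k hk
  have := hanti hk
  omega

/-- extract the finsupp from a diamond -/
noncomputable def lOf (N : ℕ) {d : ℕ} (D : DFold d) : ℕ →₀ ℕ :=
  Finsupp.onFinset (Finset.Icc 1 N)
    (fun m => if m ∈ Finset.Icc 1 N then m * (D.a (m - 1) - D.a m) else 0)
    (fun m h => by by_contra hc; simp [hc] at h)

lemma lOf_apply_mem {N d : ℕ} (D : DFold d) {m : ℕ} (hm : m ∈ Finset.Icc 1 N) :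
    lOf N D m = m * (D.a (m - 1) - D.a m) := by
  simp only [lOf, Finsupp.onFinset_apply, if_pos hm]

lemma lOf_apply_not_mem {N d : ℕ} (D : DFold d) {m : ℕ} (hm : m ∉ Finset.Icc 1 N) :
    lOf N D m = 0 := by
  simp only [lOf, Finsupp.onFinset_apply, if_neg hm]

lemma lOf_mem_Tset {d n N : ℕ} (hd : 1 ≤ d) (hnN : n ≤ N) {D : DFold d}
    (hw : (∑ᶠ k, D.a k) = n) : lOf N D ∈ Tset n N := by
  have hanti := dfold_anti hd D
  have hvan := a_vanish hd hw
  rw [mem_Tset]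
  refine ⟨?_, Finsupp.support_onFinset_subset, ?_⟩
  · have hsum : ∑ m ∈ Finset.Icc 1 N, lOf N D m
        = ∑ m ∈ Finset.Icc 1 N, m * (D.a (m - 1) - D.a m) :=
      Finset.sum_congr rfl fun m hm => lOf_apply_mem D hm
    have haN : D.a N = 0 := hvan N hnN
    have habel := abel D.a hanti N
    rw [haN, Nat.mul_zero, Nat.add_zero] at habel
    rw [hsum, habel, ← hw]
    symm
    apply finsum_eq_sum_of_support_subset
    intro x hx
    simp only [Function.mem_support] at hx
    simp only [Finset.coe_range, Set.mem_Iio]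
    by_contra hc
    exact hx (hvan x (by omega))
  · intro m hm
    rw [lOf_apply_mem D hm]
    exact Dvd.intro _ rfl

lemma DFold.ext' {d : ℕ} {X Y : DFold d} (ha : X.a = Y.a) (hb : X.b = Y.b) : X = Y := by
  cases X; cases Y
  cases ha; cases hb
  rfl

end SchmidtAux

namespace SchmidtAux

def Wset (d n N : ℕ) : Set ((ℕ →₀ ℕ) × (Fin N → Fin d → ℕ)) :=
  {p | p.1 ∈ Tset n N ∧ ∀ (k : Fin N) (j : Fin d), p.2 k j ≤ p.1 ((k : ℕ) + 1) / ((k : ℕ) + 1)}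

lemma a_eq_Aseq {d n N : ℕ} (hd : 1 ≤ d) (hnN : n ≤ N) {D : DFold d}
    (hw : (∑ᶠ k, D.a k) = n) (k : ℕ) : Aseq N (lOf N D) k = D.a k := by
  have hanti := dfold_anti hd D
  have hvan := a_vanish hd hw
  rcases Nat.lt_or_ge k N with h | h
  · have : ∑ m ∈ Finset.Icc (k + 1) N, lOf N D m / m
        = ∑ m ∈ Finset.Icc (k + 1) N, (D.a (m - 1) - D.a m) := by
      apply Finset.sum_congr rfl
      intro m hm
      rw [Finset.mem_Icc] at hm
      rw [lOf_apply_mem D (Finset.mem_Icc.mpr ⟨by omega, hm.2⟩)]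
      exact Nat.mul_div_cancel_left _ (by omega)
    rw [Aseq, this, tele D.a hanti N k (by omega), hvan N hnN, Nat.sub_zero]
  · rw [Aseq_zero _ h, hvan k (by omega)]

noncomputable def E (d n N : ℕ) (hd : 1 ≤ d) (hnN : n ≤ N) :
    {D : DFold d // (∑ᶠ k, D.a k) = n} ≃ Wset d n N where
  toFun D := ⟨(lOf N D.1, fun k j => D.1.b k j - D.1.a ((k : ℕ) + 1)), by
    refine ⟨lOf_mem_Tset hd hnN D.2, ?_⟩
    intro k j
    show D.1.b (k : ℕ) j - D.1.a ((k : ℕ) + 1) ≤ lOf N D.1 ((k : ℕ) + 1) / ((k : ℕ) + 1)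
    have hk : (k : ℕ) + 1 ∈ Finset.Icc 1 N := Finset.mem_Icc.mpr ⟨by omega, by omega⟩
    rw [lOf_apply_mem D.1 hk, Nat.add_sub_cancel,
      Nat.mul_div_cancel_left _ (by omega : 0 < (k : ℕ) + 1)]
    have h1 := D.1.upper k j
    have h2 := D.1.lower k j
    omega⟩
  invFun p := ⟨toD d N p.1.1 p.1.2, weight_toD p.2.1 _⟩
  left_inv D := by
    apply Subtype.ext
    apply DFold.ext'
    · funext k
      exact a_eq_Aseq hd hnN D.2 k
    · funext k j
      show (if h : k < N then _ else 0) = D.1.b k j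
      have hvan := a_vanish hd D.2
      split
      · next h =>
        rw [a_eq_Aseq hd hnN D.2 (k + 1), a_eq_Aseq hd hnN D.2 k]
        show min (D.1.a (k + 1) + (D.1.b k j - D.1.a (k + 1))) (D.1.a k) = D.1.b k j
        have h1 := D.1.upper k j
        have h2 := D.1.lower k j
        omega
      · next h =>
        have h1 := D.1.upper k j
        have h3 : D.1.a k = 0 := hvan k (by omega)
        omega
  right_inv p := by
    obtain ⟨⟨l, f⟩, hl, hf⟩ := p
    dsimp only at hl hf
    obtain ⟨hsum, hsupp, hdvd⟩ := mem_Tset.mp hl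
    apply Subtype.ext
    have h1 : lOf N (toD d N l f) = l := by
      ext m
      by_cases hm : m ∈ Finset.Icc 1 N
      · rw [Finset.mem_Icc] at hm
        rw [lOf_apply_mem _ (Finset.mem_Icc.mpr hm)]
        show m * (Aseq N l (m - 1) - Aseq N l m) = l m
        rw [Aseq_step l hm.1 hm.2, Nat.add_sub_cancel]
        exact Nat.mul_div_cancel' (hdvd m (Finset.mem_Icc.mpr hm))
      · rw [lOf_apply_not_mem _ hm]
        exact (Finsupp.notMem_support_iff.mp fun hs => hm (hsupp hs)).symm
    have h2 : (fun (k : Fin N) (j : Fin d) =>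
        (toD d N l f).b k j - (toD d N l f).a ((k : ℕ) + 1)) = f := by
      funext k j
      show (if h : (k : ℕ) < N then
          min (Aseq N l ((k : ℕ) + 1) + f ⟨(k : ℕ), h⟩ j) (Aseq N l (k : ℕ)) else 0)
          - Aseq N l ((k : ℕ) + 1) = f k j
      rw [dif_pos k.isLt]
      have hstep : Aseq N l ((k : ℕ)) = l ((k : ℕ) + 1) / ((k : ℕ) + 1) + Aseq N l ((k : ℕ) + 1) := by
        have := Aseq_step (N := N) l (m := (k : ℕ) + 1) (by omega) (by omega)
        rwa [Nat.add_sub_cancel] at this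
      have hb := hf k j
      have hfe : f ⟨(k : ℕ), k.isLt⟩ j = f k j := by congr
      rw [hfe]
      omega
    show (lOf N (toD d N l f), fun k j => _) = (l, f)
    rw [h1, h2]

end SchmidtAux

namespace SchmidtAux

noncomputable def sFinset (d n N : ℕ) : Finset ((ℕ →₀ ℕ) × (Fin N → Fin d → ℕ)) :=
  (Tset n N).biUnion fun l => ({l} : Finset (ℕ →₀ ℕ)) ×ˢ
    Fintype.piFinset fun k : Fin N => Fintype.piFinset fun _ : Fin d =>
      Finset.range (l ((k : ℕ) + 1) / ((k : ℕ) + 1) + 1)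

lemma Wset_eq_coe (d n N : ℕ) : Wset d n N = ↑(sFinset d n N) := by
  ext p
  simp only [Wset, Set.mem_setOf_eq, sFinset, Finset.coe_biUnion, Set.mem_iUnion,
    Finset.mem_coe, Finset.mem_product, Finset.mem_singleton, Fintype.mem_piFinset,
    Finset.mem_range, Nat.lt_succ_iff]
  constructor
  · rintro ⟨h1, h2⟩
    exact ⟨p.1, h1, rfl, fun k j => h2 k j⟩
  · rintro ⟨l, hl, h1, h2⟩
    subst h1
    exact ⟨hl, h2⟩

lemma card_Wset (d n N : ℕ) :
    Nat.card (Wset d n N)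
      = ∑ l ∈ Tset n N, ∏ k ∈ Finset.range N, (l (k + 1) / (k + 1) + 1) ^ d := by
  rw [Nat.card_coe_set_eq, Wset_eq_coe, Set.ncard_coe_finset, sFinset,
    Finset.card_biUnion]
  · apply Finset.sum_congr rfl
    intro l _
    rw [Finset.card_product, Finset.card_singleton, one_mul, Fintype.card_piFinset]
    rw [← Fin.prod_univ_eq_prod_range (fun k => (l (k + 1) / (k + 1) + 1) ^ d) N]
    apply Finset.prod_congr rfl
    intro k _
    rw [Fintype.card_piFinset]
    simp [Finset.card_range]
  · intro x _ y _ hxy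
    simp only [Finset.disjoint_left, Finset.mem_product, Finset.mem_singleton]
    rintro p ⟨h1, _⟩ ⟨h2, _⟩
    exact hxy (h1 ▸ h2)

lemma sFold_eq (d n N : ℕ) (hd : 1 ≤ d) (hnN : n ≤ N) :
    sFold d n = ∑ l ∈ Tset n N, ∏ k ∈ Finset.range N, (l (k + 1) / (k + 1) + 1) ^ d := by
  rw [← card_Wset d n N, sFold, ← Nat.card_coe_set_eq]
  exact Nat.card_congr (E d n N hd hnN)

end SchmidtAux


/-- Corollary 3.1: `∑_{n≥0} s_d(n) qⁿ = ∏_{n≥1} (∑_{j≥0} (j+1)^d q^{jn})` in `ℤ⟦q⟧`,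
stated coefficient-wise: the `n`-th coefficient of the infinite product equals that of
the partial product over the first `N ≥ n` factors, since every further factor is
`1 + O(q^{N+1})`.  The `m`-th factor `∑_{j≥0} (j+1)^d q^{jm}` is the power series whose
`t`-th coefficient is `(t/m + 1)^d` if `m ∣ t` and `0` otherwise. -/
theorem schmidt_dfold_generating_function_alt (d : ℕ) (hd : 1 ≤ d)
    (n N : ℕ) (hnN : n ≤ N) :
    PowerSeries.coeff (R := ℤ) n (PowerSeries.mk fun m => (sFold d m : ℤ)) =
      PowerSeries.coeff (R := ℤ) n
        (∏ m ∈ Finset.Icc 1 N,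
          PowerSeries.mk fun t => if m ∣ t then ((t / m : ℕ) + 1 : ℤ) ^ d else 0) := by
  rw [coeff_mk, PowerSeries.coeff_prod]
  have hcoeff : ∀ (l : ℕ →₀ ℕ), ∀ m ∈ Finset.Icc 1 N,
      (coeff (l m) (PowerSeries.mk fun t => if m ∣ t then ((t / m : ℕ) + 1 : ℤ) ^ d else 0))
        = if m ∣ l m then ((l m / m : ℕ) + 1 : ℤ) ^ d else 0 := fun l m _ => coeff_mk _ _
  have hsub : SchmidtAux.Tset n N ⊆ Finset.finsuppAntidiag (Finset.Icc 1 N) n :=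
    Finset.filter_subset _ _
  rw [← Finset.sum_subset hsub (fun l hmem hnot => ?_),
    SchmidtAux.sFold_eq d n N hd hnN]
  · rw [Nat.cast_sum]
    apply Finset.sum_congr rfl
    intro l hl
    calc ((∏ k ∈ Finset.range N, (l (k + 1) / (k + 1) + 1) ^ d : ℕ) : ℤ)
        = ∏ k ∈ Finset.range N, ((l (k + 1) / (k + 1) : ℕ) + 1 : ℤ) ^ d := by
          simp only [Nat.cast_prod, Nat.cast_pow, Nat.cast_add, Nat.cast_one]
      _ = ∏ m ∈ Finset.Icc 1 N, ((l m / m : ℕ) + 1 : ℤ) ^ d := by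
          rw [show Finset.Icc 1 N = Finset.Ico 1 (N + 1) by rw [Finset.Ico_add_one_right_eq_Icc],
            Finset.prod_Ico_eq_prod_range]
          simp only [Nat.add_sub_cancel]
          exact Finset.prod_congr rfl fun k _ => by rw [Nat.add_comm 1 k]
      _ = ∏ m ∈ Finset.Icc 1 N,
            (coeff (l m) (PowerSeries.mk fun t =>
              if m ∣ t then ((t / m : ℕ) + 1 : ℤ) ^ d else 0)) :=
          (Finset.prod_congr rfl fun m hm => by
            rw [hcoeff l m hm, if_pos ((SchmidtAux.mem_Tset.mp hl).2.2 m hm)]).symm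
  · have hm : ¬ ∀ m ∈ Finset.Icc 1 N, m ∣ l m := fun h =>
      hnot (Finset.mem_filter.mpr ⟨hmem, h⟩)
    push_neg at hm
    obtain ⟨m, hmmem, hmdvd⟩ := hm
    exact Finset.prod_eq_zero hmmem (by rw [hcoeff l m hmmem, if_neg hmdvd])
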